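/- Let T be a p-string of length n ending with a special static character $ that occurs nowhere else in T, and let k_T = RA_T⁻¹[n]. Then for every 1 ≤ p ≤ n, ⟦T⟧[p] = L_T[LF_T^{−p}(k_T)], where LF_T^{−p} denotes the p-fold iteration of the inverse of the LF mapping. -/

import Mathlib

/-! Common framework: parameterized strings over static alphabet `σ` and
parameter alphabet `π`.  A p-string is a `List (σ ⊕ π)`. -/

variable {σ π : Type*}

instance instInhabSum [Inhabited σ] : Inhabited (σ ⊕ π) := ⟨Sum.inl default⟩

/-- one right rotation: the last character moves to the front -/
def rotR1 {α : Type*} (W : List α) : List α := W.rotate (W.length - 1)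

/-- `rotR W i` is the `i`-th right rotation `Rot(W, i)` -/
def rotR {α : Type*} (W : List α) : ℕ → List α
  | 0 => W
  | i + 1 => rotR1 (rotR W i)

/-- 1-based access `W[i]` (junk default outside the range) -/
def get1 {α : Type*} [Inhabited α] (W : List α) (i : ℕ) : α := W.getD (i - 1) default

/-- the prev-encoding `⟨T⟩`, a list over `σ ⊕ ℕ∞` -/
def prevEnc [DecidableEq σ] [DecidableEq π] (T : List (σ ⊕ π)) : List (σ ⊕ ℕ∞) :=
  (List.range T.length).map fun k =>
    match T[k]? with
    | none => Sum.inr ⊤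
    | some (Sum.inl a) => Sum.inl a
    | some (Sum.inr b) =>
      match ((List.range k).filter fun j => T[j]? = some (Sum.inr b)).max? with
      | none => Sum.inr ⊤
      | some j => Sum.inr ((k - j : ℕ) : ℕ∞)

/-- number of distinct parameter characters occurring in `W` -/
def distinctParams [DecidableEq π] (W : List (σ ⊕ π)) : ℕ :=
  (W.filterMap Sum.getRight?).dedup.length

/-- the encoding `⟦T⟧`, a list over `σ ⊕ ℕ`:  a static character is kept; a
parameter character at (1-based) position `i` is replaced by the number of
distinct parameter characters in `Rot(T, n-i)[1:ℓ]` where `ℓ` is the leftmost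
occurrence position of `T[i]` in `Rot(T, n-i)`. -/
def encodeE [DecidableEq σ] [DecidableEq π] (T : List (σ ⊕ π)) : List (σ ⊕ ℕ) :=
  (List.range T.length).map fun k =>
    match T[k]? with
    | none => Sum.inr 0
    | some (Sum.inl a) => Sum.inl a
    | some (Sum.inr b) =>
      let R := rotR T (T.length - (k + 1))
      Sum.inr (distinctParams (R.take (R.idxOf (Sum.inr b) + 1)))

/-- order on prev-encoding characters: every static character is smaller than
every element of `ℕ∞` (and `ℕ∞` carries its usual order with `∞` on top) -/
def pvlt [LT σ] : (σ ⊕ ℕ∞) → (σ ⊕ ℕ∞) → Prop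
  | Sum.inl a, Sum.inl b => a < b
  | Sum.inl _, Sum.inr _ => True
  | Sum.inr _, Sum.inl _ => False
  | Sum.inr x, Sum.inr y => x < y

/-- `T` is a p-string of length ≥ 1 ending with the static character `d`,
which occurs nowhere else in `T`. -/
def EndsWith [DecidableEq σ] [DecidableEq π] (T : List (σ ⊕ π)) (d : σ) : Prop :=
  1 ≤ T.length ∧ T.getLast? = some (Sum.inl d) ∧ T.count (Sum.inl d) = 1

/-- `RA` represents the parameterized rotation array `RA_T` (0-based indices:
`RA_T[i] = (RA ⟨i-1⟩).val + 1`): the prev-encodings of the rotations are listed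
in strictly increasing lexicographic order. -/
def IsRA [LinearOrder σ] [DecidableEq π] (T : List (σ ⊕ π))
    (RA : Fin T.length ≃ Fin T.length) : Prop :=
  ∀ i j : Fin T.length, i < j →
    List.Lex pvlt (prevEnc (rotR T ((RA i).val + 1))) (prevEnc (rotR T ((RA j).val + 1)))

/-- `LF` represents the LF mapping: `LF_T(i) = j` iff `T_{RA_T[i]+1} = T_{RA_T[j]}`. -/
def IsLF [LinearOrder σ] [DecidableEq π] (T : List (σ ⊕ π))
    (RA LF : Fin T.length ≃ Fin T.length) : Prop :=
  ∀ i : Fin T.length, rotR T ((RA i).val + 2) = rotR T ((RA (LF i)).val + 1)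

/-- the pBWT array `L_T[i] = ⟦T_{RA_T[i]}⟧[n]` -/
def Larr [LinearOrder σ] [DecidableEq π] [Inhabited σ] (T : List (σ ⊕ π))
    (RA : Fin T.length ≃ Fin T.length) (i : Fin T.length) : σ ⊕ ℕ :=
  get1 (encodeE (rotR T ((RA i).val + 1))) T.length

/-- the array `F_T[i] = ⟦T_{RA_T[i]}⟧[1]` -/
def Farr [LinearOrder σ] [DecidableEq π] [Inhabited σ] (T : List (σ ⊕ π))
    (RA : Fin T.length ≃ Fin T.length) (i : Fin T.length) : σ ⊕ ℕ :=
  get1 (encodeE (rotR T ((RA i).val + 1))) 1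

/-- longest common prefix of two lists -/
def lcp {α : Type*} [DecidableEq α] : List α → List α → List α
  | a :: as, b :: bs => if a = b then a :: lcp as bs else []
  | _, _ => []

/-- `lcp∞(X, Y)`: the number of `∞`'s in the longest common prefix of `X` and `Y` -/
def lcpInf [DecidableEq σ] (X Y : List (σ ⊕ ℕ∞)) : ℕ :=
  (lcp X Y).count (Sum.inr ⊤)

/-- the `∞`-LCP array (1-based): `LCP∞_T[i] = lcp∞(⟨T_{RA_T[i]}⟩, ⟨T_{RA_T[i+1]}⟩)`
for `1 ≤ i < n`, and `0` otherwise. -/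
def LCPa [LinearOrder σ] [DecidableEq π] (T : List (σ ⊕ π))
    (RA : Fin T.length ≃ Fin T.length) (i : ℕ) : ℕ :=
  if h : 1 ≤ i ∧ i < T.length then
    lcpInf (prevEnc (rotR T ((RA ⟨i - 1, by omega⟩).val + 1)))
           (prevEnc (rotR T ((RA ⟨i, h.2⟩).val + 1)))
  else 0

/-- parameterized match: a bijection on `σ ⊕ π` fixing all static characters
renames `S` into `T` -/
def PMatch (S T : List (σ ⊕ π)) : Prop :=
  ∃ f : (σ ⊕ π) ≃ (σ ⊕ π), (∀ a : σ, f (Sum.inl a) = Sum.inl a) ∧ S.map f = T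

/-- leftmost (1-based) occurrence position of `c` in `W`, `0` if absent -/
def leftPos [DecidableEq σ] [DecidableEq π] (W : List (σ ⊕ π)) (c : σ ⊕ π) : ℕ :=
  if W.contains c then W.idxOf c + 1 else 0

/-- rightmost (1-based) occurrence position of `c` in `W`, `0` if absent -/
def rightPos [DecidableEq σ] [DecidableEq π] (W : List (σ ⊕ π)) (c : σ ⊕ π) : ℕ :=
  if W.contains c then W.length - W.reverse.idxOf c else 0




section AuxRot

lemma rotR_eq_rotate {α : Type*} (W : List α) (i : ℕ) :
    rotR W i = W.rotate (i * (W.length - 1)) := by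
  induction i with
  | zero => simp [rotR]
  | succ i ih =>
    show rotR1 (rotR W i) = _
    rw [ih, rotR1, List.length_rotate, List.rotate_rotate, Nat.succ_mul]

lemma length_rotR {α : Type*} (W : List α) (i : ℕ) :
    (rotR W i).length = W.length := by
  rw [rotR_eq_rotate]; exact List.length_rotate _ _

lemma rotR_length_self {α : Type*} (W : List α) : rotR W W.length = W := by
  rw [rotR_eq_rotate]; exact List.rotate_length_mul _ _

lemma rotR_length_eq {α : Type*} (W : List α) {m : ℕ} (h : W.length = m) :
    rotR W m = W := h ▸ rotR_length_self W

lemma rotR_add {α : Type*} (W : List α) (a b : ℕ) :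
    rotR W (a + b) = rotR (rotR W a) b := by
  induction b with
  | zero => rfl
  | succ b ih => show rotR1 (rotR W (a + b)) = rotR1 (rotR (rotR W a) b); rw [ih]

lemma get1_encodeE_rot [DecidableEq σ] [DecidableEq π] [Inhabited σ]
    (T : List (σ ⊕ π)) (p : ℕ) (h1 : 1 ≤ p) (h2 : p ≤ T.length) :
    get1 (encodeE T) p = get1 (encodeE (rotR T (T.length - p))) T.length := by
  have hRlen : (rotR T (T.length - p)).length = T.length := length_rotR _ _
  have hlen1 : (encodeE T).length = T.length := by simp [encodeE]
  have hlen2 : (encodeE (rotR T (T.length - p))).length = T.length := by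
    simp [encodeE, hRlen]
  have hp : p - 1 < (encodeE T).length := by omega
  have hq : T.length - 1 < (encodeE (rotR T (T.length - p))).length := by omega
  have hpT : p - 1 < T.length := by omega
  have hqR : T.length - 1 < (rotR T (T.length - p)).length := by omega
  obtain ⟨r, hr⟩ : ∃ r, p = r + 1 := ⟨p - 1, by omega⟩
  obtain ⟨q, hq'⟩ : ∃ q, T.length = p + q := ⟨T.length - p, by omega⟩
  have hidx : (rotR T (T.length - p))[T.length - 1]'hqR = T[p - 1]'hpT := by
    have hq2 : T.length - 1 < (T.rotate ((T.length - p) * (T.length - 1))).length := by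
      rw [List.length_rotate]; omega
    have step : (rotR T (T.length - p))[T.length - 1]'hqR
        = (T.rotate ((T.length - p) * (T.length - 1)))[T.length - 1]'hq2 := by
      congr 1
      exact rotR_eq_rotate T (T.length - p)
    rw [step, List.getElem_rotate]
    congr 1
    have e1 : T.length - 1 + (T.length - p) * (T.length - 1) = T.length * q + r := by
      have hq3 : T.length - p = q := by omega
      have hrq : T.length - 1 = r + q := by omega
      rw [hq3, hrq, hq', hr]
      ring
    rw [e1, Nat.mul_add_mod]
    rw [Nat.mod_eq_of_lt (show r < T.length by omega)]
    omega
  have hget1 : T[p - 1]? = some (T[p - 1]'hpT) := by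
    exact List.getElem?_eq_getElem hpT
  have hget2 : (rotR T (T.length - p))[T.length - 1]? = some (T[p - 1]'hpT) := by
    rw [List.getElem?_eq_getElem hqR, hidx]
  unfold get1
  rw [List.getD_eq_getElem _ _ hp, List.getD_eq_getElem _ _ hq]
  simp only [encodeE, List.getElem_map, List.getElem_range]
  rw [hget1, hRlen, hget2]
  have e2 : T.length - (p - 1 + 1) = T.length - p := by omega
  have e3 : T.length - (T.length - 1 + 1) = 0 := by omega
  rw [e2, e3]
  cases hx : T[p - 1]'hpT with
  | inl a => rfl
  | inr b =>
    show Sum.inr (distinctParams _) = Sum.inr (distinctParams _)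
    have hR0 : rotR (rotR T (T.length - p)) 0 = rotR T (T.length - p) := rfl
    rw [hR0]

end AuxRot

/-- With `k_T = RA_T⁻¹[n]`, for every `1 ≤ p ≤ n`,
`⟦T⟧[p] = L_T[LF_T^{-p}(k_T)]`, where `LF_T^{-p}` is the `p`-fold iterate of the
inverse of the LF mapping. -/
theorem encode_eq_Larr_iterate [LinearOrder σ] [DecidableEq π] [Inhabited σ]
    (d : σ) (hd : ∀ a : σ, d ≤ a)
    (T : List (σ ⊕ π)) (hT : EndsWith T d)
    (RA : Fin T.length ≃ Fin T.length) (hRA : IsRA T RA)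
    (LF : Fin T.length ≃ Fin T.length) (hLF : IsLF T RA LF)
    (kT : Fin T.length) (hkT : (RA kT).val + 1 = T.length) :
    ∀ p : ℕ, 1 ≤ p → p ≤ T.length →
      get1 (encodeE T) p = Larr T RA ((LF.symm : Fin T.length → Fin T.length)^[p] kT) := by
  intro p hp1 hp2
  have chain : ∀ q : ℕ,
      rotR T ((RA ((LF.symm : Fin T.length → Fin T.length)^[q] kT)).val + 1 + q) = T := by
    intro q
    induction q with
    | zero =>
      simp only [Function.iterate_zero, id_eq, Nat.add_zero, hkT]
      exact rotR_length_self T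
    | succ q ih =>
      have hLFj : LF ((LF.symm : Fin T.length → Fin T.length)^[q + 1] kT)
          = (LF.symm : Fin T.length → Fin T.length)^[q] kT := by
        rw [Function.iterate_succ_apply']
        exact LF.apply_symm_apply _
      have h1 := hLF ((LF.symm : Fin T.length → Fin T.length)^[q + 1] kT)
      rw [hLFj] at h1
      have h3 : (RA ((LF.symm : Fin T.length → Fin T.length)^[q + 1] kT)).val + 1 + (q + 1)
          = (RA ((LF.symm : Fin T.length → Fin T.length)^[q + 1] kT)).val + 2 + q := by omega
      rw [h3, rotR_add, h1, ← rotR_add, ih]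
  have hc := chain p
  have h4 : rotR (rotR T ((RA ((LF.symm : Fin T.length → Fin T.length)^[p] kT)).val + 1)) p
      = T := by rw [← rotR_add]; exact hc
  have h5 := congrArg (fun W => rotR W (T.length - p)) h4
  simp only [← rotR_add] at h5
  have h6 : (RA ((LF.symm : Fin T.length → Fin T.length)^[p] kT)).val + 1 + p + (T.length - p)
      = (RA ((LF.symm : Fin T.length → Fin T.length)^[p] kT)).val + 1 + T.length := by omega
  rw [h6, rotR_add, rotR_length_eq _ (length_rotR T _)] at h5
  unfold Larr
  rw [h5]
  exact get1_encodeE_rot T p hp1 hp2
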